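/- Let G be a topological group, Γ a dense subgroup of G, and K' ≤ K subgroups of G such that both K and K' are open in G. Then the index of Γ ∩ K' in Γ ∩ K equals the index of K' in K; i.e., the relative index [Γ ∩ K : Γ ∩ K'] = [K : K']. -/

import Mathlib

open scoped Pointwise

/-- If `Γ` is a dense subgroup of a topological group `G` and `K' ≤ K` are open
subgroups of `G`, then the relative index `[Γ ∩ K : Γ ∩ K']` equals `[K : K']`. -/
theorem relindex_inter_of_dense_of_open {G : Type*} [Group G] [TopologicalSpace G]
    [IsTopologicalGroup G] (Γ K K' : Subgroup G)
    (hΓ : Dense (Γ : Set G)) (hK : IsOpen (K : Set G)) (hK' : IsOpen (K' : Set G))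
    (hle : K' ≤ K) :
    (Γ ⊓ K').relIndex (Γ ⊓ K) = K'.relIndex K := by
  have h1 : Γ ⊓ K' = K' ⊓ (Γ ⊓ K) := by
    rw [inf_comm K' (Γ ⊓ K), inf_assoc, inf_of_le_right hle]
  rw [h1, Subgroup.inf_relIndex_right]
  -- Now goal: K'.relindex (Γ ⊓ K) = K'.relindex K
  rw [Subgroup.relIndex, Subgroup.relIndex, Subgroup.index, Subgroup.index]
  refine Nat.card_congr (Equiv.ofBijective ?_ ⟨?_, ?_⟩)
  · exact Quotient.map' (Subgroup.inclusion inf_le_right)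
      (fun x y h => by
        rw [QuotientGroup.leftRel_apply] at h ⊢
        exact h)
  · intro a b hab
    induction a using Quotient.inductionOn'
    induction b using Quotient.inductionOn'
    rw [Quotient.map'_mk'', Quotient.map'_mk'', Quotient.eq''] at hab
    rw [Quotient.eq'']
    rw [QuotientGroup.leftRel_apply] at hab ⊢
    exact hab
  · intro q
    induction q using Quotient.inductionOn' with
    | h x =>
      obtain ⟨γ, hγU, hγΓ⟩ := hΓ.inter_open_nonempty ((x : G) • (K' : Set G))
        (hK'.leftCoset x) ⟨x, 1, K'.one_mem, mul_one _⟩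
      obtain ⟨k', hk', hγ⟩ := hγU
      have hγK : γ ∈ K := hγ ▸ K.mul_mem x.2 (hle hk')
      refine ⟨Quotient.mk'' ⟨γ, hγΓ, hγK⟩, ?_⟩
      rw [Quotient.map'_mk'', Quotient.eq'', QuotientGroup.leftRel_apply]
      show (γ : G)⁻¹ * x ∈ K'
      have : (x : G)⁻¹ * γ ∈ K' := by
        rw [← hγ]; simpa using hk'
      simpa using K'.inv_mem this
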